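/- The infinite sum of 1/(i^2 · binom(2i, i)) for i from 1 to infinity equals π²/18. -/

import Mathlib

open Real Finset MeasureTheory

lemma basel' : HasSum (fun n : ℕ => (1:ℝ)/((n:ℝ)+1)^2) (Real.pi^2/6) := by
  have h := (hasSum_nat_add_iff (f := fun n : ℕ => (1:ℝ)/(n:ℝ)^2) 1).mpr
    (by simpa using hasSum_zeta_two)
  have e : (fun n : ℕ => (1:ℝ)/((n:ℝ)+1)^2) = (fun n : ℕ => (1:ℝ)/(((n+1:ℕ):ℝ))^2) := by
    funext n; push_cast; ring
  rw [e]; exact h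

lemma hasSum_eta2 : HasSum (fun n : ℕ => (-1:ℝ)^n / ((n:ℝ)+1)^2) (Real.pi^2/12) := by
  have hb := basel'
  have hodd : HasSum (fun k : ℕ => (1:ℝ)/(((2*k+1:ℕ):ℝ)+1)^2) (Real.pi^2/24) := by
    have h4 := hb.mul_left (1/4 : ℝ)
    have e : (fun k : ℕ => (1:ℝ)/(((2*k+1:ℕ):ℝ)+1)^2)
        = (fun k : ℕ => 1/4 * ((1:ℝ)/((k:ℝ)+1)^2)) := by
      funext k; push_cast; field_simp; ring
    rw [e, show Real.pi^2/24 = 1/4*(Real.pi^2/6) by ring]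
    exact h4
  have hevensum : Summable (fun k : ℕ => (1:ℝ)/(((2*k:ℕ):ℝ)+1)^2) := by
    exact hb.summable.comp_injective (i := fun k : ℕ => 2*k)
      (mul_right_injective₀ (two_ne_zero' ℕ))
  obtain ⟨E, hE⟩ := hevensum
  have htot := HasSum.even_add_odd (f := fun n : ℕ => (1:ℝ)/((n:ℝ)+1)^2) hE hodd
  have hEval : E = Real.pi^2/6 - Real.pi^2/24 := by
    have := hb.unique htot; linarith
  have geven : HasSum (fun k : ℕ => (-1:ℝ)^(2*k) / (((2*k:ℕ):ℝ)+1)^2) E := by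
    have e : (fun k : ℕ => (-1:ℝ)^(2*k) / (((2*k:ℕ):ℝ)+1)^2)
        = (fun k : ℕ => (1:ℝ)/(((2*k:ℕ):ℝ)+1)^2) := by
      funext k; rw [pow_mul]; norm_num
    rw [e]; exact hE
  have godd : HasSum (fun k : ℕ => (-1:ℝ)^(2*k+1) / (((2*k+1:ℕ):ℝ)+1)^2) (-(Real.pi^2/24)) := by
    have e : (fun k : ℕ => (-1:ℝ)^(2*k+1) / (((2*k+1:ℕ):ℝ)+1)^2)
        = (fun k : ℕ => -((1:ℝ)/(((2*k+1:ℕ):ℝ)+1)^2)) := by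
      funext k; rw [pow_succ, pow_mul]; norm_num [neg_div]
    rw [e]; exact hodd.neg
  have h := HasSum.even_add_odd (f := fun n : ℕ => (-1:ℝ)^n/((n:ℝ)+1)^2) geven godd
  rw [show E + -(Real.pi^2/24) = Real.pi^2/12 by rw [hEval]; ring] at h
  exact h


lemma prod_fact (a : ℕ) : ∀ n : ℕ, Nat.factorial a * (∏ j ∈ Finset.range n, (a+1+j)) = Nat.factorial (a+n)
  | 0 => by simp
  | n+1 => by
      rw [Finset.prod_range_succ, ← mul_assoc, prod_fact a n, ← Nat.add_assoc,
        Nat.factorial_succ]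
      ring

lemma beta_nat (i : ℕ) : (∫ x in (0:ℝ)..1, x^i * (1-x)^(i+1))
    = (Nat.factorial i : ℝ) * (Nat.factorial (i+1)) / (Nat.factorial (2*i+2)) := by
  have h := Complex.betaIntegral_eval_nat_add_one_right (u := (i:ℂ)+1)
    (by simp; positivity) (i+1)
  have key : Complex.betaIntegral ((i:ℂ)+1) (((i+1:ℕ):ℂ)+1)
      = ((∫ x in (0:ℝ)..1, x^i*(1-x)^(i+1) : ℝ) : ℂ) := by
    rw [Complex.betaIntegral, ← intervalIntegral.integral_ofReal]
    apply intervalIntegral.integral_congr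
    intro x _
    show (x:ℂ) ^ ((i:ℂ)+1-1) * (1-(x:ℂ)) ^ ((((i+1:ℕ)):ℂ)+1-1) = ((x^i*(1-x)^(i+1) : ℝ) : ℂ)
    rw [show ((i:ℂ)+1-1) = ((i:ℕ):ℂ) from by push_cast; ring,
        show ((((i+1:ℕ)):ℂ)+1-1) = (((i+1:ℕ)):ℂ) from by ring,
        Complex.cpow_natCast, Complex.cpow_natCast]
    push_cast; ring
  rw [key] at h
  have hP : ((Nat.factorial i : ℂ)) * (∏ j ∈ Finset.range (i+1+1), ((i:ℂ)+1+j))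
      = ((Nat.factorial (2*i+2)) : ℂ) := by
    have hn := prod_fact i (i+2)
    have e : (∏ j ∈ Finset.range (i+1+1), ((i:ℂ)+1+j))
        = ((∏ j ∈ Finset.range (i+2), (i+1+j) : ℕ) : ℂ) := by push_cast; ring
    rw [e, ← Nat.cast_mul, hn, show i + (i+2) = 2*i+2 from by omega]
  have hPne : (∏ j ∈ Finset.range (i+1+1), ((i:ℂ)+1+j)) ≠ 0 := by
    intro h0; rw [h0, mul_zero] at hP
    exact (Nat.factorial_ne_zero _) (by exact_mod_cast hP.symm)
  have hfne : ((Nat.factorial i : ℂ)) ≠ 0 := by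
    exact_mod_cast Nat.factorial_ne_zero i
  have h2 : ((∫ x in (0:ℝ)..1, x^i*(1-x)^(i+1) : ℝ) : ℂ)
      = ((Nat.factorial i : ℂ) * (Nat.factorial (i+1)) / (Nat.factorial (2*i+2))) := by
    rw [h, ← hP]
    field_simp
  have h3 : ((∫ x in (0:ℝ)..1, x^i*(1-x)^(i+1) : ℝ) : ℂ)
      = (((Nat.factorial i : ℝ) * (Nat.factorial (i+1)) / (Nat.factorial (2*i+2)) : ℝ) : ℂ) := by
    rw [h2]; push_cast; ring
  exact Complex.ofReal_inj.mp h3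

lemma intF (i : ℕ) : (∫ t in Set.Ioc (0:ℝ) 1, t^i*(1-t)^(i+1)/((i:ℝ)+1))
    = 1/(((i:ℝ)+1)^2 * ((Nat.choose (2*(i+1)) (i+1)) : ℝ)) := by
  rw [← intervalIntegral.integral_of_le zero_le_one, intervalIntegral.integral_div, beta_nat]
  have hnat : (i+1)^2 * Nat.choose (2*(i+1)) (i+1) * Nat.factorial i * Nat.factorial (i+1)
      = Nat.factorial (2*i+2) * (i+1) := by
    have hc := Nat.choose_mul_factorial_mul_factorial
      (show i+1 ≤ 2*(i+1) by omega)
    have e1 : 2*(i+1) - (i+1) = i+1 := by omega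
    rw [e1] at hc
    calc (i+1)^2 * Nat.choose (2*(i+1)) (i+1) * Nat.factorial i * Nat.factorial (i+1)
        = (i+1) * (Nat.choose (2*(i+1)) (i+1) * ((i+1) * Nat.factorial i) * Nat.factorial (i+1)) := by ring
      _ = (i+1) * (Nat.choose (2*(i+1)) (i+1) * Nat.factorial (i+1) * Nat.factorial (i+1)) := by
          rw [← Nat.factorial_succ]
      _ = (i+1) * Nat.factorial (2*(i+1)) := by rw [hc]
      _ = Nat.factorial (2*i+2) * (i+1) := by rw [show 2*(i+1) = 2*i+2 from by omega]; ring
  have hr : (((i:ℝ)+1))^2 * ((Nat.choose (2*(i+1)) (i+1)) : ℝ) * (Nat.factorial i : ℝ) * (Nat.factorial (i+1) : ℝ)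
      = (Nat.factorial (2*i+2) : ℝ) * ((i:ℝ)+1) := by exact_mod_cast hnat
  have hcne : ((Nat.choose (2*(i+1)) (i+1)) : ℝ) ≠ 0 := by
    exact_mod_cast (Nat.choose_pos (show i+1 ≤ 2*(i+1) by omega)).ne'
  have hfne : (Nat.factorial (2*i+2) : ℝ) ≠ 0 := by
    exact_mod_cast Nat.factorial_ne_zero _
  have hi1 : ((i:ℝ)+1) ≠ 0 := by positivity
  rw [div_div, div_eq_div_iff (by exact mul_ne_zero hfne hi1) (by exact mul_ne_zero (by positivity) hcne)]
  linear_combination hr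

lemma intG (n : ℕ) : (∫ t in Set.Ioc (0:ℝ) 1, (-1:ℝ)^n * (t^n - t^(3*n+2))/((n:ℝ)+1))
    = (-1:ℝ)^n * (2/3) / ((n:ℝ)+1)^2 := by
  rw [← intervalIntegral.integral_of_le zero_le_one]
  have e : ∀ t : ℝ, (-1:ℝ)^n * (t^n - t^(3*n+2))/((n:ℝ)+1)
      = ((-1:ℝ)^n/((n:ℝ)+1)) * (t^n - t^(3*n+2)) := fun t => by ring
  simp_rw [e]
  rw [intervalIntegral.integral_const_mul,
    intervalIntegral.integral_sub (intervalIntegral.intervalIntegrable_pow _)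
      (intervalIntegral.intervalIntegrable_pow _),
    integral_pow, integral_pow]
  have h1 : ((n:ℝ)+1) ≠ 0 := by positivity
  have h2 : ((3*n+2:ℕ):ℝ)+1 ≠ 0 := by positivity
  field_simp
  push_cast
  ring

lemma pointwise (t : ℝ) (ht : t ∈ Set.Ioc (0:ℝ) 1) :
    (∑' i : ℕ, t^i*(1-t)^(i+1)/((i:ℝ)+1))
      = ∑' n : ℕ, (-1:ℝ)^n * (t^n - t^(3*n+2))/((n:ℝ)+1) := by
  obtain ⟨ht0, ht1⟩ := ht
  rcases eq_or_lt_of_le ht1 with h1 | h1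
  · rw [h1]; simp
  · have hne : t ≠ 0 := ne_of_gt ht0
    have habs : |t*(1-t)| < 1 := by
      rw [abs_of_nonneg (by nlinarith)]; nlinarith
    have h1s := hasSum_pow_div_log_of_abs_lt_one habs
    have habs2 : |(-t)| < 1 := by rw [abs_neg, abs_of_pos ht0]; exact h1
    have h2s := hasSum_pow_div_log_of_abs_lt_one habs2
    have habs3 : |(-t^3)| < 1 := by
      rw [abs_neg, abs_of_pos (by positivity)]; exact pow_lt_one₀ ht0.le h1 (by norm_num)
    have h3s := hasSum_pow_div_log_of_abs_lt_one habs3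
    rw [sub_neg_eq_add] at h2s h3s
    have hlog : -Real.log (1 - t*(1-t)) = Real.log (1+t) - Real.log (1+t^3) := by
      have e : (1:ℝ) + t^3 = (1+t) * (1 - t*(1-t)) := by ring
      rw [e, Real.log_mul (by positivity) (by nlinarith)]
      ring
    have hF : HasSum (fun i : ℕ => t^i*(1-t)^(i+1)/((i:ℝ)+1))
        (t⁻¹ * (Real.log (1+t) - Real.log (1+t^3))) := by
      have hm := h1s.mul_left t⁻¹
      have e : (fun i : ℕ => t^i*(1-t)^(i+1)/((i:ℝ)+1))
          = (fun i : ℕ => t⁻¹ * ((t*(1-t))^(i+1)/((i:ℝ)+1))) := by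
        funext i
        rw [mul_pow, pow_succ t i]
        field_simp
      rw [e, ← hlog]
      exact hm
    have hG : HasSum (fun n : ℕ => (-1:ℝ)^n * (t^n - t^(3*n+2))/((n:ℝ)+1))
        (t⁻¹ * (Real.log (1+t) - Real.log (1+t^3))) := by
      have hm := (h2s.sub h3s).mul_left (-t⁻¹)
      have e : (fun n : ℕ => (-1:ℝ)^n * (t^n - t^(3*n+2))/((n:ℝ)+1))
          = (fun n : ℕ => -t⁻¹ * ((-t)^(n+1)/((n:ℝ)+1) - (-t^3)^(n+1)/((n:ℝ)+1))) := by
        funext n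
        rw [show ((-t)^(n+1) : ℝ) = (-1)^(n+1) * t^(n+1) from by rw [neg_pow],
            show ((-t^3)^(n+1) : ℝ) = (-1)^(n+1) * (t^3)^(n+1) from by rw [neg_pow],
            show ((t^3)^(n+1) : ℝ) = t^(3*n+3) from by rw [← pow_mul]; ring_nf,
            pow_succ (-1:ℝ) n, pow_succ t n,
            show (t^(3*n+3) : ℝ) = t^(3*n+2) * t from by rw [← pow_succ]]
        field_simp
        ring
      rw [e, show t⁻¹ * (Real.log (1+t) - Real.log (1+t^3))
          = -t⁻¹ * (-Real.log (1+t) - -Real.log (1+t^3)) from by ring]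
      exact hm
    rw [hF.tsum_eq, hG.tsum_eq]

theorem stmt_6 : (∑' i : ℕ, (1:ℝ) / (((i:ℝ)+1)^2 * ((Nat.choose (2*(i+1)) (i+1)) : ℝ))) = Real.pi^2 / 18 := by
  have hFcont : ∀ i : ℕ, Continuous (fun t : ℝ => t^i*(1-t)^(i+1)/((i:ℝ)+1)) := fun i =>
    ((continuous_pow i).mul ((continuous_const.sub continuous_id).pow (i+1))).div_const _
  have hGcont : ∀ n : ℕ, Continuous (fun t : ℝ => (-1:ℝ)^n * (t^n - t^(3*n+2))/((n:ℝ)+1)) := fun n =>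
    (continuous_const.mul ((continuous_pow n).sub (continuous_pow (3*n+2)))).div_const _
  have hFint : ∀ i : ℕ, Integrable (fun t : ℝ => t^i*(1-t)^(i+1)/((i:ℝ)+1))
      (MeasureTheory.volume.restrict (Set.Ioc (0:ℝ) 1)) := fun i => (hFcont i).integrableOn_Ioc
  have hGint : ∀ n : ℕ, Integrable (fun t : ℝ => (-1:ℝ)^n * (t^n - t^(3*n+2))/((n:ℝ)+1))
      (MeasureTheory.volume.restrict (Set.Ioc (0:ℝ) 1)) := fun n => (hGcont n).integrableOn_Ioc
  have hFnorm : ∀ i : ℕ, (∫ t in Set.Ioc (0:ℝ) 1, ‖t^i*(1-t)^(i+1)/((i:ℝ)+1)‖)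
      = 1/(((i:ℝ)+1)^2 * ((Nat.choose (2*(i+1)) (i+1)) : ℝ)) := by
    intro i
    rw [← intF i]
    apply MeasureTheory.setIntegral_congr_fun measurableSet_Ioc
    intro t ht
    exact Real.norm_of_nonneg (div_nonneg (mul_nonneg (pow_nonneg ht.1.le _)
      (pow_nonneg (by linarith [ht.2]) _)) (by positivity))
  have hFsum : Summable (fun i : ℕ => ∫ t in Set.Ioc (0:ℝ) 1, ‖t^i*(1-t)^(i+1)/((i:ℝ)+1)‖) := by
    rw [show (fun i : ℕ => ∫ t in Set.Ioc (0:ℝ) 1, ‖t^i*(1-t)^(i+1)/((i:ℝ)+1)‖)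
        = fun i : ℕ => 1/(((i:ℝ)+1)^2 * ((Nat.choose (2*(i+1)) (i+1)) : ℝ)) from funext hFnorm]
    apply Summable.of_nonneg_of_le (fun i => by positivity) _ basel'.summable
    intro i
    apply one_div_le_one_div_of_le (by positivity)
    apply le_mul_of_one_le_right (by positivity)
    exact_mod_cast Nat.one_le_iff_ne_zero.mpr (Nat.choose_pos (show i+1 ≤ 2*(i+1) by omega)).ne'
  have hGnorm : ∀ n : ℕ, (∫ t in Set.Ioc (0:ℝ) 1, ‖(-1:ℝ)^n * (t^n - t^(3*n+2))/((n:ℝ)+1)‖)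
      = (2/3)/((n:ℝ)+1)^2 := by
    intro n
    have step : (∫ t in Set.Ioc (0:ℝ) 1, ‖(-1:ℝ)^n * (t^n - t^(3*n+2))/((n:ℝ)+1)‖)
        = ∫ t in Set.Ioc (0:ℝ) 1, (-1:ℝ)^n * ((-1:ℝ)^n * (t^n - t^(3*n+2))/((n:ℝ)+1)) := by
      apply MeasureTheory.setIntegral_congr_fun measurableSet_Ioc
      intro t ht
      have hle : t^(3*n+2) ≤ t^n := pow_le_pow_of_le_one ht.1.le ht.2 (by omega)
      have : (-1:ℝ)^n * ((-1:ℝ)^n * (t^n - t^(3*n+2))/((n:ℝ)+1))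
          = (t^n - t^(3*n+2))/((n:ℝ)+1) := by
        rw [mul_div_assoc', ← mul_assoc, ← pow_add, ← two_mul, pow_mul]
        norm_num
      show ‖(-1:ℝ)^n * (t^n - t^(3*n+2))/((n:ℝ)+1)‖
          = (-1:ℝ)^n * ((-1:ℝ)^n * (t^n - t^(3*n+2))/((n:ℝ)+1))
      have habs : ‖(-1:ℝ)^n * (t^n - t^(3*n+2))/((n:ℝ)+1)‖
          = (t^n - t^(3*n+2))/((n:ℝ)+1) := by
        rw [norm_div, norm_mul, norm_pow, norm_neg, norm_one, one_pow, one_mul,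
          Real.norm_of_nonneg (by linarith : (0:ℝ) ≤ t^n - t^(3*n+2)),
          Real.norm_of_nonneg (by positivity : (0:ℝ) ≤ (n:ℝ)+1)]
      rw [habs]
      exact this.symm
    rw [step, MeasureTheory.integral_const_mul, intG]
    rw [mul_div_assoc', ← mul_assoc, ← pow_add, ← two_mul, pow_mul]
    norm_num
  have hGsum : Summable (fun n : ℕ => ∫ t in Set.Ioc (0:ℝ) 1, ‖(-1:ℝ)^n * (t^n - t^(3*n+2))/((n:ℝ)+1)‖) := by
    rw [show (fun n : ℕ => ∫ t in Set.Ioc (0:ℝ) 1, ‖(-1:ℝ)^n * (t^n - t^(3*n+2))/((n:ℝ)+1)‖)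
        = fun n : ℕ => (2/3) * (1/((n:ℝ)+1)^2) from funext fun n => by rw [hGnorm]; ring]
    exact basel'.summable.mul_left _
  calc (∑' i : ℕ, (1:ℝ) / (((i:ℝ)+1)^2 * ((Nat.choose (2*(i+1)) (i+1)) : ℝ)))
      = ∑' i : ℕ, ∫ t in Set.Ioc (0:ℝ) 1, t^i*(1-t)^(i+1)/((i:ℝ)+1) :=
        tsum_congr (fun i => (intF i).symm)
    _ = ∫ t in Set.Ioc (0:ℝ) 1, ∑' i : ℕ, t^i*(1-t)^(i+1)/((i:ℝ)+1) :=
        MeasureTheory.integral_tsum_of_summable_integral_norm hFint hFsum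
    _ = ∫ t in Set.Ioc (0:ℝ) 1, ∑' n : ℕ, (-1:ℝ)^n * (t^n - t^(3*n+2))/((n:ℝ)+1) :=
        MeasureTheory.setIntegral_congr_fun measurableSet_Ioc (fun t ht => pointwise t ht)
    _ = ∑' n : ℕ, ∫ t in Set.Ioc (0:ℝ) 1, (-1:ℝ)^n * (t^n - t^(3*n+2))/((n:ℝ)+1) :=
        (MeasureTheory.integral_tsum_of_summable_integral_norm hGint hGsum).symm
    _ = ∑' n : ℕ, (-1:ℝ)^n * (2/3)/((n:ℝ)+1)^2 := tsum_congr intG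
    _ = Real.pi^2/18 := by
        rw [show (fun n : ℕ => (-1:ℝ)^n * (2/3)/((n:ℝ)+1)^2)
            = fun n : ℕ => (2/3)*((-1:ℝ)^n/((n:ℝ)+1)^2) from funext fun n => by ring,
          (hasSum_eta2.mul_left (2/3 : ℝ)).tsum_eq]
        ring
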